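/- Let K be the Bochner–Riesz kernel associated to a nondegenerate diagonal quadratic surface S ⊂ F_q^4. Then for every E ⊂ F_q^4: ‖E ∗ K̂‖_{L^6(F_q^4,dx)} ≲ q^{-19/6} |E|^{5/6} if 1 ≤ |E| ≤ q; ≲ q^{-10/3} |E| if q ≤ |E| ≤ q²; and ≲ q^{-3} |E|^{5/6} if q² ≤ |E| ≤ q⁴. -/

import Mathlib

open Finset

def quadSurf {F : Type} [Field F] [Fintype F] [DecidableEq F] {d : ℕ}
    (a : Fin d → F) : Finset (Fin d → F) :=
  Finset.univ.filter (fun x => ∑ i, a i * x i ^ 2 = 0)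

def dualSurf {F : Type} [Field F] [Fintype F] [DecidableEq F] {d : ℕ}
    (a : Fin d → F) : Finset (Fin d → F) :=
  Finset.univ.filter (fun m => ∑ i, m i ^ 2 * (a i)⁻¹ = 0)

noncomputable def gSum {F : Type} [Field F] [Fintype F] [DecidableEq F]
    (χ : AddChar F ℂ) : ℂ :=
  ∑ s ∈ Finset.univ.erase (0 : F), ((quadraticChar F s : ℤ) : ℂ) * χ s

noncomputable def sigmaInv {F : Type} [Field F] [Fintype F] [DecidableEq F]
    (χ : AddChar F ℂ) {d : ℕ} (a : Fin d → F) (m : Fin d → F) : ℂ :=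
  ((quadSurf a).card : ℂ)⁻¹ * ∑ x ∈ quadSurf a, χ (∑ i, m i * x i)

noncomputable def brKernel {F : Type} [Field F] [Fintype F] [DecidableEq F]
    (χ : AddChar F ℂ) {d : ℕ} (a : Fin d → F) (m : Fin d → F) : ℂ :=
  if m = 0 then 0 else sigmaInv χ a m

noncomputable def brKernelHat {F : Type} [Field F] [Fintype F] [DecidableEq F]
    (χ : AddChar F ℂ) {d : ℕ} (a : Fin d → F) (x : Fin d → F) : ℂ :=
  ∑ m : Fin d → F, brKernel χ a m * χ (-(∑ i, m i * x i))

noncomputable def convInd {F : Type} [Field F] [Fintype F] [DecidableEq F]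
    (χ : AddChar F ℂ) {d : ℕ} (a : Fin d → F) (E : Finset (Fin d → F))
    (x : Fin d → F) : ℂ :=
  ((Fintype.card F : ℂ) ^ d)⁻¹ *
    ∑ y : Fin d → F, (if x - y ∈ E then brKernelHat χ a y else 0)

noncomputable def convSig {F : Type} [Field F] [Fintype F] [DecidableEq F]
    {d : ℕ} (a : Fin d → F) (f : (Fin d → F) → ℂ) (x : Fin d → F) : ℂ :=
  ((quadSurf a).card : ℂ)⁻¹ * ∑ y ∈ quadSurf a, f (x - y)

noncomputable def Lnorm {α : Type} [Fintype α] (r : ℝ) (g : α → ℂ) : ℝ :=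
  ((Fintype.card α : ℝ)⁻¹ * ∑ x : α, ‖g x‖ ^ r) ^ (1 / r)

noncomputable def Complex.abs : AbsoluteValue ℂ ℝ where
  toFun z := ‖z‖
  map_mul' := norm_mul
  nonneg' := norm_nonneg
  eq_zero' _ := norm_eq_zero
  add_le' := norm_add_le

lemma Complex.abs_def (z : ℂ) : Complex.abs z = ‖z‖ := rfl

lemma Complex.abs_apply (z : ℂ) : Complex.abs z = Real.sqrt (Complex.normSq z) := Complex.norm_def z

lemma Complex.sq_abs (z : ℂ) : Complex.abs z ^ 2 = Complex.normSq z := Complex.sq_norm z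

@[simp] lemma Complex.abs_natCast (n : ℕ) : Complex.abs (n : ℂ) = n := Complex.norm_natCast n

@[simp] lemma Complex.abs_ofReal (x : ℝ) : Complex.abs (x : ℂ) = |x| := Complex.norm_real x

set_option linter.unusedSectionVars false


section Aux
variable {F : Type} [Field F] [Fintype F] [DecidableEq F]

lemma char_sum_mul {χ : AddChar F ℂ} (hχ : χ ≠ 1) (v : F) :
    ∑ t : F, χ (t * v) = if v = 0 then (Fintype.card F : ℂ) else 0 := by
  have := AddChar.sum_mulShift v (AddChar.IsPrimitive.of_ne_one hχ)
  rw [this]; split_ifs <;> simp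

lemma char_map_finsum (χ : AddChar F ℂ) {ι : Type} (s : Finset ι) (f : ι → F) :
    χ (∑ i ∈ s, f i) = ∏ i ∈ s, χ (f i) := by
  induction s using Finset.cons_induction with
  | empty => simp
  | cons a s ha ih => rw [Finset.sum_cons, Finset.prod_cons, AddChar.map_add_eq_mul, ih]

lemma conj_char {χ : AddChar F ℂ} (v : F) :
    (starRingEnd ℂ) (χ v) = χ (-v) := by
  rw [AddChar.starComp_apply (Nat.pos_of_ne_zero (CharP.ringChar_ne_zero_of_finite F)),
    AddChar.inv_apply]

/-- orthogonality over F^4, sum over second slot -/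
lemma char_sum_dot₂ {χ : AddChar F ℂ} (hχ : χ ≠ 1) (z : Fin 4 → F) :
    ∑ x : Fin 4 → F, χ (∑ i, z i * x i) = if z = 0 then ((Fintype.card F : ℂ))^4 else 0 := by
  have key : ∑ x : Fin 4 → F, χ (∑ i, z i * x i)
      = ∏ i : Fin 4, ∑ u : F, χ (z i * u) := by
    rw [Finset.prod_univ_sum (fun _ => (univ : Finset F)) (fun i u => χ (z i * u))]
    rw [Fintype.piFinset_univ]
    exact Finset.sum_congr rfl fun x _ => (char_map_finsum χ univ fun i => z i * x i)
  rw [key]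
  by_cases hz : z = 0
  · simp [hz, Finset.prod_const, AddChar.map_zero_eq_one]
  · rw [if_neg hz]
    obtain ⟨i, hi⟩ : ∃ i, z i ≠ 0 := by
      by_contra h; push_neg at h; exact hz (funext h)
    apply Finset.prod_eq_zero (Finset.mem_univ i)
    have : ∑ u : F, χ (z i * u) = ∑ u : F, χ (u * z i) := by
      exact Finset.sum_congr rfl fun u _ => by rw [mul_comm]
    rw [this, char_sum_mul hχ, if_neg hi]

lemma char_sum_dot₁ {χ : AddChar F ℂ} (hχ : χ ≠ 1) (z : Fin 4 → F) :
    ∑ m : Fin 4 → F, χ (∑ i, m i * z i) = if z = 0 then ((Fintype.card F : ℂ))^4 else 0 := by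
  rw [← char_sum_dot₂ hχ z]
  exact Finset.sum_congr rfl fun m _ => by rw [show ∑ i, m i * z i = ∑ i, z i * m i from
    Finset.sum_congr rfl fun i _ => mul_comm _ _]

end Aux



section Aux2
variable {F : Type} [Field F] [Fintype F] [DecidableEq F]

noncomputable def etac (F : Type) [Field F] [Fintype F] [DecidableEq F] : MulChar F ℂ :=
  (quadraticChar F).ringHomComp (Int.castRingHom ℂ)

@[simp] lemma etac_apply (a : F) : etac F a = ((quadraticChar F a : ℤ) : ℂ) := rfl

lemma etac_ne_one (hne2 : ringChar F ≠ 2) : etac F ≠ 1 :=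
  (MulChar.ringHomComp_ne_one_iff (Int.cast_injective (α := ℂ))).mpr (quadraticChar_ne_one hne2)

lemma etac_isQuadratic : (etac F).IsQuadratic :=
  (quadraticChar_isQuadratic F).comp _

lemma etac_dichotomy {c : F} (hc : c ≠ 0) : etac F c = 1 ∨ etac F c = -1 := by
  rcases quadraticChar_dichotomy hc with h | h <;> simp [h]

lemma etac_sq {c : F} (hc : c ≠ 0) : etac F c ^ 2 = 1 := by
  rcases etac_dichotomy hc with h | h <;> rw [h] <;> ring

lemma etac_abs {c : F} (hc : c ≠ 0) : Complex.abs (etac F c) = 1 := by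
  rcases etac_dichotomy hc with h | h <;> simp [h]

lemma gs_sq {χ : AddChar F ℂ} (hχ : χ ≠ 1) (hne2 : ringChar F ≠ 2) :
    gaussSum (etac F) χ ^ 2 = etac F (-1) * (Fintype.card F : ℂ) :=
  gaussSum_sq (etac_ne_one hne2) etac_isQuadratic (AddChar.IsPrimitive.of_ne_one hχ)

lemma gs_pow_four {χ : AddChar F ℂ} (hχ : χ ≠ 1) (hne2 : ringChar F ≠ 2) :
    gaussSum (etac F) χ ^ 4 = (Fintype.card F : ℂ) ^ 2 := by
  have h2 : gaussSum (etac F) χ ^ 4 = (gaussSum (etac F) χ ^ 2) ^ 2 := by ring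
  rw [h2, gs_sq hχ hne2, mul_pow]
  have hm1 : (-1 : F) ≠ 0 := by
    intro h; exact (one_ne_zero (α := F)) (by linear_combination -h)
  rcases etac_dichotomy hm1 with h | h <;> rw [h] <;> ring

lemma sum_char_sq {χ : AddChar F ℂ} (hχ : χ ≠ 1) (hne2 : ringChar F ≠ 2)
    {c : F} (hc : c ≠ 0) :
    ∑ u : F, χ (c * u ^ 2) = etac F c * gaussSum (etac F) χ := by
  have fib : ∑ u : F, χ (c * u ^ 2)
      = ∑ a : F, ∑ u ∈ univ.filter (fun u : F => u ^ 2 = a), χ (c * u ^ 2) := by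
    rw [Finset.sum_fiberwise_of_maps_to (fun x _ => Finset.mem_univ _)]
  have inner : ∀ a : F, ∑ u ∈ univ.filter (fun u : F => u ^ 2 = a), χ (c * u ^ 2)
      = (((quadraticChar F a : ℤ) : ℂ) + 1) * χ (c * a) := by
    intro a
    rw [show (∑ u ∈ univ.filter (fun u : F => u ^ 2 = a), χ (c * u ^ 2))
        = ∑ _u ∈ univ.filter (fun u : F => u ^ 2 = a), χ (c * a) from
      Finset.sum_congr rfl (fun u hu => by
        rw [Finset.mem_filter] at hu; rw [hu.2]), Finset.sum_const]
    have hcard : ((univ.filter (fun u : F => u ^ 2 = a)).card : ℤ)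
        = quadraticChar F a + 1 := by
      rw [← quadraticChar_card_sqrts hne2 a]
      congr 1
      rw [Set.toFinset_setOf]
    have : ((univ.filter (fun u : F => u ^ 2 = a)).card : ℂ)
        = ((quadraticChar F a : ℤ) : ℂ) + 1 := by exact_mod_cast congrArg (Int.cast : ℤ → ℂ) hcard
    rw [nsmul_eq_mul, this]
  rw [fib, Finset.sum_congr rfl (fun a _ => inner a)]
  have split : ∑ a : F, (((quadraticChar F a : ℤ) : ℂ) + 1) * χ (c * a)
      = ∑ a : F, etac F a * χ (c * a) + ∑ a : F, χ (c * a) := by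
    rw [← Finset.sum_add_distrib]
    exact Finset.sum_congr rfl fun a _ => by rw [etac_apply]; ring
  rw [split]
  have h0 : ∑ a : F, χ (c * a) = 0 := by
    have := char_sum_mul hχ c
    rw [if_neg hc] at this
    rw [← this]
    exact Finset.sum_congr rfl fun a _ => by rw [mul_comm]
  rw [h0, add_zero]
  -- ∑ a, etac a * χ (c*a) = gaussSum etac (mulShift χ c) = etac c * gaussSum
  have hmul : ∑ a : F, etac F a * χ (c * a) = gaussSum (etac F) (AddChar.mulShift χ c) := by
    unfold gaussSum
    exact Finset.sum_congr rfl fun a _ => by rw [AddChar.mulShift_apply, mul_comm c a]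
  have hshift := gaussSum_mulShift (etac F) χ (Units.mk0 c hc)
  rw [hmul]
  have : etac F c * (etac F c * gaussSum (etac F) (AddChar.mulShift χ c))
      = etac F c * gaussSum (etac F) χ := by
    rw [show ((Units.mk0 c hc : Fˣ) : F) = c from rfl] at hshift
    rw [hshift]
  calc gaussSum (etac F) (AddChar.mulShift χ c)
      = (etac F c ^ 2) * gaussSum (etac F) (AddChar.mulShift χ c) := by rw [etac_sq hc]; ring
    _ = etac F c * gaussSum (etac F) χ := by rw [pow_two, mul_assoc, this]

lemma sum_char_quad {χ : AddChar F ℂ} (hχ : χ ≠ 1) (hne2 : ringChar F ≠ 2)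
    {c : F} (hc : c ≠ 0) (b : F) :
    ∑ u : F, χ (c * u ^ 2 + b * u)
      = χ (-(b ^ 2 * (4 * c)⁻¹)) * (etac F c * gaussSum (etac F) χ) := by
  have h2 : (2 : F) ≠ 0 := Ring.two_ne_zero hne2
  have h4 : (4 : F) ≠ 0 := by
    intro h; apply h2; have : (2 : F) * 2 = 4 := by norm_num
    rcases mul_eq_zero.mp (this.trans h) with h' | h' <;> exact h'
  set t := b * (2 * c)⁻¹ with ht
  have key : ∀ u : F, c * u ^ 2 + b * u = c * (u + t) ^ 2 + -(b ^ 2 * (4 * c)⁻¹) := by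
    intro u
    rw [ht]; field_simp; ring
  calc ∑ u : F, χ (c * u ^ 2 + b * u)
      = ∑ u : F, χ (c * (u + t) ^ 2) * χ (-(b ^ 2 * (4 * c)⁻¹)) := by
        exact Finset.sum_congr rfl fun u _ => by rw [← AddChar.map_add_eq_mul, ← key u]
    _ = (∑ u : F, χ (c * (u + t) ^ 2)) * χ (-(b ^ 2 * (4 * c)⁻¹)) := by
        rw [Finset.sum_mul]
    _ = (∑ v : F, χ (c * v ^ 2)) * χ (-(b ^ 2 * (4 * c)⁻¹)) := by
        congr 1
        exact Fintype.sum_equiv (Equiv.addRight t) _ _ fun u => rfl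
    _ = χ (-(b ^ 2 * (4 * c)⁻¹)) * (etac F c * gaussSum (etac F) χ) := by
        rw [sum_char_sq hχ hne2 hc]; ring

end Aux2

section Aux3
variable {F : Type} [Field F] [Fintype F] [DecidableEq F]

noncomputable def epsb (b : Fin 4 → F) : ℂ := ∏ i, etac F (b i)

lemma epsb_dichotomy {b : Fin 4 → F} (hb : ∀ i, b i ≠ 0) :
    epsb b = 1 ∨ epsb b = -1 := by
  unfold epsb
  have : ∀ s : Finset (Fin 4), (∏ i ∈ s, etac F (b i)) = 1 ∨ (∏ i ∈ s, etac F (b i)) = -1 := by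
    intro s
    induction s using Finset.cons_induction with
    | empty => left; simp
    | cons a s ha ih =>
      rw [Finset.prod_cons]
      rcases etac_dichotomy (hb a) with h | h <;> rcases ih with h' | h' <;>
        rw [h, h'] <;> simp
  exact this Finset.univ

lemma epsb_abs {b : Fin 4 → F} (hb : ∀ i, b i ≠ 0) : Complex.abs (epsb b) = 1 := by
  rcases epsb_dichotomy hb with h | h <;> simp [h]

lemma Tsum {χ : AddChar F ℂ} (hχ : χ ≠ 1) (hne2 : ringChar F ≠ 2)
    {b : Fin 4 → F} (hb : ∀ i, b i ≠ 0) (m : Fin 4 → F) :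
    (Fintype.card F : ℂ) * ∑ x ∈ quadSurf b, χ (∑ i, m i * x i)
    = (if m = 0 then (Fintype.card F : ℂ) ^ 4 else 0)
      + epsb b * (Fintype.card F : ℂ) ^ 2 *
        ((if (∑ i, m i ^ 2 * (b i)⁻¹) = 0 then (Fintype.card F : ℂ) else 0) - 1) := by
  have h2 : (2 : F) ≠ 0 := Ring.two_ne_zero hne2
  have h4 : (4 : F) ≠ 0 := by
    intro h; apply h2; have h22 : (2 : F) * 2 = 4 := by norm_num
    rcases mul_eq_zero.mp (h22.trans h) with h' | h' <;> exact h'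
  set q : ℂ := (Fintype.card F : ℂ) with hq
  set g : ℂ := gaussSum (etac F) χ with hg
  set Q : (Fin 4 → F) → F := fun x => ∑ i, b i * x i ^ 2 with hQ
  set Qd : F := ∑ i, m i ^ 2 * (b i)⁻¹ with hQd
  -- step 1: q * T = ∑_t ∑_x χ (t * Q x + dot m x)
  have step1 : q * ∑ x ∈ quadSurf b, χ (∑ i, m i * x i)
      = ∑ t : F, ∑ x : Fin 4 → F, χ (t * Q x + ∑ i, m i * x i) := by
    rw [Finset.sum_comm]
    unfold quadSurf
    rw [Finset.sum_filter, Finset.mul_sum]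
    refine Finset.sum_congr rfl fun x _ => ?_
    have horth := char_sum_mul hχ (Q x)
    by_cases hx : Q x = 0
    · rw [if_pos (by exact hx)]
      have harg : ∑ t : F, χ (t * Q x + ∑ i, m i * x i)
          = ∑ _t : F, χ (∑ i, m i * x i) :=
        Finset.sum_congr rfl fun t _ => by rw [hx, mul_zero, zero_add]
      rw [harg, Finset.sum_const, Finset.card_univ, nsmul_eq_mul, hq]
    · rw [if_neg (by exact hx)]
      have : ∑ t : F, χ (t * Q x + ∑ i, m i * x i)
          = (∑ t : F, χ (t * Q x)) * χ (∑ i, m i * x i) := by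
        rw [Finset.sum_mul]
        exact Finset.sum_congr rfl fun t _ => by rw [AddChar.map_add_eq_mul]
      rw [this, horth, if_neg hx, zero_mul, mul_zero]
  -- inner sum for t ≠ 0
  have inner : ∀ t : F, t ≠ 0 →
      ∑ x : Fin 4 → F, χ (t * Q x + ∑ i, m i * x i)
      = epsb b * g ^ 4 * χ (Qd * (-(4 * t)⁻¹)) := by
    intro t ht
    have harg : ∀ x : Fin 4 → F, t * Q x + ∑ i, m i * x i
        = ∑ i, ((t * b i) * x i ^ 2 + m i * x i) := by
      intro x
      rw [hQ, Finset.mul_sum, ← Finset.sum_add_distrib]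
      exact Finset.sum_congr rfl fun i _ => by ring
    have hfact : ∑ x : Fin 4 → F, χ (t * Q x + ∑ i, m i * x i)
        = ∏ i : Fin 4, ∑ u : F, χ ((t * b i) * u ^ 2 + m i * u) := by
      rw [Finset.prod_univ_sum (fun _ => (Finset.univ : Finset F))
        (fun i u => χ ((t * b i) * u ^ 2 + m i * u)), Fintype.piFinset_univ]
      exact Finset.sum_congr rfl fun x _ => by
        rw [harg x, char_map_finsum]
    rw [hfact]
    have heach : ∀ i : Fin 4, ∑ u : F, χ ((t * b i) * u ^ 2 + m i * u)
        = χ (-(m i ^ 2 * (4 * (t * b i))⁻¹)) * (etac F (t * b i) * g) :=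
      fun i => sum_char_quad hχ hne2 (mul_ne_zero ht (hb i)) (m i)
    rw [Finset.prod_congr rfl fun i _ => heach i]
    rw [Finset.prod_mul_distrib, Finset.prod_mul_distrib]
    have hchi : ∏ i : Fin 4, χ (-(m i ^ 2 * (4 * (t * b i))⁻¹)) = χ (Qd * (-(4 * t)⁻¹)) := by
      rw [← char_map_finsum]
      congr 1
      rw [hQd, Finset.sum_mul]
      exact Finset.sum_congr rfl fun i _ => by
        field_simp
    have heta : ∏ i : Fin 4, etac F (t * b i) = epsb b := by
      have : ∀ i : Fin 4, etac F (t * b i) = etac F t * etac F (b i) :=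
        fun i => map_mul (etac F) t (b i)
      rw [Finset.prod_congr rfl fun i _ => this i, Finset.prod_mul_distrib, epsb]
      rw [Finset.prod_const]
      have : etac F t ^ (Finset.univ : Finset (Fin 4)).card = 1 := by
        rw [show (Finset.univ : Finset (Fin 4)).card = 4 from rfl,
          show (4 : ℕ) = 2 * 2 from rfl, pow_mul, etac_sq ht, one_pow]
      rw [this, one_mul]
    rw [hchi, heta, Finset.prod_const]
    rw [show (Finset.univ : Finset (Fin 4)).card = 4 from rfl]
    ring
  -- split the t-sum
  have hsplit : ∑ t : F, ∑ x : Fin 4 → F, χ (t * Q x + ∑ i, m i * x i)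
      = (∑ x : Fin 4 → F, χ (∑ i, m i * x i))
        + ∑ t ∈ Finset.univ.erase (0 : F), ∑ x : Fin 4 → F, χ (t * Q x + ∑ i, m i * x i) := by
    rw [← Finset.add_sum_erase _ _ (Finset.mem_univ (0 : F))]
    congr 1
    exact Finset.sum_congr rfl fun x _ => by rw [zero_mul, zero_add]
  have hzero : ∑ x : Fin 4 → F, χ (∑ i, m i * x i)
      = if m = 0 then q ^ 4 else 0 := by
    have := char_sum_dot₂ hχ m
    rw [← this]
  have herase : ∑ t ∈ Finset.univ.erase (0 : F), ∑ x : Fin 4 → F, χ (t * Q x + ∑ i, m i * x i)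
      = epsb b * g ^ 4 * ∑ t ∈ Finset.univ.erase (0 : F), χ (Qd * (-(4 * t)⁻¹)) := by
    rw [Finset.mul_sum]
    exact Finset.sum_congr rfl fun t ht => by
      rw [inner t (Finset.ne_of_mem_erase ht)]
  have hbij : ∑ t ∈ Finset.univ.erase (0 : F), χ (Qd * (-(4 * t)⁻¹))
      = ∑ s ∈ Finset.univ.erase (0 : F), χ (Qd * s) := by
    refine Finset.sum_nbij' (fun t => -(4 * t)⁻¹) (fun s => -(4 * s)⁻¹) ?_ ?_ ?_ ?_ ?_
    · intro t ht
      refine Finset.mem_erase.mpr ⟨?_, Finset.mem_univ _⟩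
      exact neg_ne_zero.mpr (inv_ne_zero (mul_ne_zero h4 (Finset.ne_of_mem_erase ht)))
    · intro s hs
      refine Finset.mem_erase.mpr ⟨?_, Finset.mem_univ _⟩
      exact neg_ne_zero.mpr (inv_ne_zero (mul_ne_zero h4 (Finset.ne_of_mem_erase hs)))
    · intro t ht
      have ht0 := Finset.ne_of_mem_erase ht
      field_simp
    · intro s hs
      have hs0 := Finset.ne_of_mem_erase hs
      field_simp
    · intro t ht; rfl
  have hlast : ∑ s ∈ Finset.univ.erase (0 : F), χ (Qd * s)
      = (if Qd = 0 then q else 0) - 1 := by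
    have hins : ∑ s : F, χ (Qd * s) = χ (Qd * 0) + ∑ s ∈ Finset.univ.erase (0 : F), χ (Qd * s) :=
      (Finset.add_sum_erase _ _ (Finset.mem_univ (0 : F))).symm
    have hall : ∑ s : F, χ (Qd * s) = if Qd = 0 then q else 0 := by
      rw [← char_sum_mul hχ Qd]
      exact Finset.sum_congr rfl fun s _ => by rw [mul_comm]
    rw [hall] at hins
    rw [mul_zero, AddChar.map_zero_eq_one] at hins
    rw [hins]; ring
  rw [step1, hsplit, hzero, herase, hbij, hlast, gs_pow_four hχ hne2, ← hq]

end Aux3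

section Aux4
variable {F : Type} [Field F] [Fintype F] [DecidableEq F]

lemma dualSurf_eq_quadSurf (a : Fin 4 → F) :
    dualSurf a = quadSurf (fun i => (a i)⁻¹) := by
  unfold dualSurf quadSurf
  ext m
  simp only [Finset.mem_filter, Finset.mem_univ, true_and]
  rw [Finset.sum_congr rfl fun i (_ : i ∈ Finset.univ) => mul_comm (m i ^ 2) ((a i)⁻¹)]

lemma zero_mem_quadSurf (b : Fin 4 → F) : (0 : Fin 4 → F) ∈ quadSurf b := by
  unfold quadSurf
  simp

lemma quadSurf_card_cases {χ : AddChar F ℂ} (hχ : χ ≠ 1) (hne2 : ringChar F ≠ 2)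
    {b : Fin 4 → F} (hb : ∀ i, b i ≠ 0) :
    (((quadSurf b).card : ℝ) = (Fintype.card F : ℝ) ^ 3 + (Fintype.card F : ℝ) ^ 2 - (Fintype.card F : ℝ))
    ∨ (((quadSurf b).card : ℝ) = (Fintype.card F : ℝ) ^ 3 - (Fintype.card F : ℝ) ^ 2 + (Fintype.card F : ℝ)) := by
  have h := Tsum hχ hne2 hb (0 : Fin 4 → F)
  have hqne : (Fintype.card F : ℂ) ≠ 0 := by
    exact_mod_cast Fintype.card_ne_zero
  have hL : ∑ x ∈ quadSurf b, χ (∑ i, (0 : Fin 4 → F) i * x i) = ((quadSurf b).card : ℂ) := by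
    have hones : ∀ x ∈ quadSurf b, χ (∑ i, (0 : Fin 4 → F) i * x i) = 1 := fun x _ => by simp
    rw [Finset.sum_congr rfl hones, Finset.sum_const, nsmul_eq_mul, mul_one]
  rw [hL, if_pos rfl, if_pos (by simp)] at h
  rcases epsb_dichotomy hb with he | he <;> rw [he] at h
  · left
    have hc : ((quadSurf b).card : ℂ)
        = (Fintype.card F : ℂ) ^ 3 + (Fintype.card F : ℂ) ^ 2 - (Fintype.card F : ℂ) := by
      apply mul_left_cancel₀ hqne
      rw [h]; ring
    have h2 : (((quadSurf b).card : ℝ) : ℂ)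
        = (((Fintype.card F : ℝ) ^ 3 + (Fintype.card F : ℝ) ^ 2 - (Fintype.card F : ℝ) : ℝ) : ℂ) := by
      push_cast
      exact_mod_cast hc
    exact Complex.ofReal_inj.mp h2
  · right
    have hc : ((quadSurf b).card : ℂ)
        = (Fintype.card F : ℂ) ^ 3 - (Fintype.card F : ℂ) ^ 2 + (Fintype.card F : ℂ) := by
      apply mul_left_cancel₀ hqne
      rw [h]; ring
    have h2 : (((quadSurf b).card : ℝ) : ℂ)
        = (((Fintype.card F : ℝ) ^ 3 - (Fintype.card F : ℝ) ^ 2 + (Fintype.card F : ℝ) : ℝ) : ℂ) := by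
      push_cast
      exact_mod_cast hc
    exact Complex.ofReal_inj.mp h2

lemma quadSurf_card_low {χ : AddChar F ℂ} (hχ : χ ≠ 1) (hne2 : ringChar F ≠ 2)
    {b : Fin 4 → F} (hb : ∀ i, b i ≠ 0) (hq3 : (3 : ℝ) ≤ (Fintype.card F : ℝ)) :
    (2 / 3) * (Fintype.card F : ℝ) ^ 3 ≤ ((quadSurf b).card : ℝ) := by
  rcases quadSurf_card_cases hχ hne2 hb with h | h <;> rw [h] <;> nlinarith

lemma quadSurf_card_up {χ : AddChar F ℂ} (hχ : χ ≠ 1) (hne2 : ringChar F ≠ 2)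
    {b : Fin 4 → F} (hb : ∀ i, b i ≠ 0) (hq3 : (3 : ℝ) ≤ (Fintype.card F : ℝ)) :
    ((quadSurf b).card : ℝ) ≤ 2 * (Fintype.card F : ℝ) ^ 3 := by
  rcases quadSurf_card_cases hχ hne2 hb with h | h <;> rw [h] <;> nlinarith

lemma Tabs_le {χ : AddChar F ℂ} (hχ : χ ≠ 1) (hne2 : ringChar F ≠ 2)
    {b : Fin 4 → F} (hb : ∀ i, b i ≠ 0) {m : Fin 4 → F} (hm : m ≠ 0) :
    Complex.abs (∑ x ∈ quadSurf b, χ (∑ i, m i * x i)) ≤ (Fintype.card F : ℝ) ^ 2 := by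
  have h := Tsum hχ hne2 hb m
  rw [if_neg hm, zero_add] at h
  have hqpos : (0 : ℝ) < (Fintype.card F : ℝ) := by
    exact_mod_cast Fintype.card_pos
  have habs := congrArg Complex.abs h
  rw [map_mul, map_mul, map_mul, epsb_abs hb, one_mul] at habs
  have h1 : Complex.abs ((Fintype.card F : ℂ)) = (Fintype.card F : ℝ) := by
    rw [Complex.abs_natCast]
  have h2 : Complex.abs ((Fintype.card F : ℂ) ^ 2) = (Fintype.card F : ℝ) ^ 2 := by
    rw [map_pow, h1]
  rw [h1, h2] at habs
  have h3 : Complex.abs ((if (∑ i, m i ^ 2 * (b i)⁻¹) = 0 then (Fintype.card F : ℂ) else 0) - 1)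
      ≤ (Fintype.card F : ℝ) := by
    have hq1 : (1 : ℝ) ≤ (Fintype.card F : ℝ) := by exact_mod_cast Fintype.card_pos
    split_ifs with hcond
    · have he : ((Fintype.card F : ℂ)) - 1 = (((Fintype.card F : ℝ) - 1 : ℝ) : ℂ) := by
        push_cast; ring
      rw [he, Complex.abs_ofReal, abs_of_nonneg (by linarith)]
      linarith
    · have he : Complex.abs ((0 : ℂ) - 1) = 1 := by simp
      rw [he]; linarith
  have hX : (Fintype.card F : ℝ) * Complex.abs (∑ x ∈ quadSurf b, χ (∑ i, m i * x i))
      ≤ (Fintype.card F : ℝ) * (Fintype.card F : ℝ) ^ 2 := by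
    rw [habs]
    nlinarith [h3, hqpos, Complex.abs.nonneg ((if (∑ i, m i ^ 2 * (b i)⁻¹) = 0 then (Fintype.card F : ℂ) else 0) - 1)]
  exact le_of_mul_le_mul_left hX hqpos

lemma Tabs_le_off {χ : AddChar F ℂ} (hχ : χ ≠ 1) (hne2 : ringChar F ≠ 2)
    {b : Fin 4 → F} (hb : ∀ i, b i ≠ 0) {m : Fin 4 → F}
    (hcond : (∑ i, m i ^ 2 * (b i)⁻¹) ≠ 0) :
    Complex.abs (∑ x ∈ quadSurf b, χ (∑ i, m i * x i)) ≤ (Fintype.card F : ℝ) := by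
  have hm : m ≠ 0 := by
    intro h; apply hcond; rw [h]; simp
  have h := Tsum hχ hne2 hb m
  rw [if_neg hm, zero_add, if_neg hcond] at h
  have hqpos : (0 : ℝ) < (Fintype.card F : ℝ) := by exact_mod_cast Fintype.card_pos
  have habs := congrArg Complex.abs h
  rw [map_mul, map_mul, map_mul, epsb_abs hb, one_mul] at habs
  rw [Complex.abs_natCast, map_pow, Complex.abs_natCast] at habs
  have h3 : Complex.abs ((0 : ℂ) - 1) = 1 := by simp
  rw [h3, mul_one] at habs
  have hX : (Fintype.card F : ℝ) * Complex.abs (∑ x ∈ quadSurf b, χ (∑ i, m i * x i))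
      ≤ (Fintype.card F : ℝ) * (Fintype.card F : ℝ) := by
    rw [habs]; nlinarith [hqpos]
  exact le_of_mul_le_mul_left hX hqpos

end Aux4

section Aux5
variable {F : Type} [Field F] [Fintype F] [DecidableEq F]

lemma abs_char (χ : AddChar F ℂ) (v : F) : Complex.abs (χ v) = 1 := by
  have h : χ v * (starRingEnd ℂ) (χ v) = 1 := by
    rw [conj_char, ← AddChar.map_add_eq_mul]
    simp
  have h2 : (Complex.normSq (χ v) : ℂ) = 1 := by rw [← Complex.mul_conj]; exact h
  have h3 : Complex.normSq (χ v) = 1 := by exact_mod_cast h2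
  rw [Complex.abs_apply, h3, Real.sqrt_one]

noncomputable def Wsum (χ : AddChar F ℂ) (E : Finset (Fin 4 → F)) (m : Fin 4 → F) : ℂ :=
  ∑ z ∈ E, χ (∑ i, m i * z i)

lemma Wsum_def (χ : AddChar F ℂ) (E : Finset (Fin 4 → F)) (m : Fin 4 → F) :
    Wsum χ E m = ∑ z ∈ E, χ (∑ i, m i * z i) := rfl

lemma Wsum_abs_le (χ : AddChar F ℂ) (E : Finset (Fin 4 → F)) (m : Fin 4 → F) :
    Complex.abs (Wsum χ E m) ≤ (E.card : ℝ) := by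
  calc Complex.abs (Wsum χ E m) ≤ ∑ z ∈ E, Complex.abs (χ (∑ i, m i * z i)) :=
        Complex.abs.sum_le _ _
    _ = (E.card : ℝ) := by
        rw [Finset.sum_congr rfl fun z _ => abs_char χ _, Finset.sum_const, nsmul_eq_mul, mul_one]

lemma Wsum_energy (χ : AddChar F ℂ) (U E : Finset (Fin 4 → F)) :
    ((∑ m ∈ U, Complex.abs (Wsum χ E m) ^ 2 : ℝ) : ℂ)
      = ∑ u ∈ E, ∑ v ∈ E, ∑ m ∈ U, χ (∑ i, m i * (u - v) i) := by
  have step1 : ((∑ m ∈ U, Complex.abs (Wsum χ E m) ^ 2 : ℝ) : ℂ)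
      = ∑ m ∈ U, Wsum χ E m * (starRingEnd ℂ) (Wsum χ E m) := by
    push_cast
    refine Finset.sum_congr rfl fun m _ => ?_
    rw [Complex.mul_conj, ← Complex.sq_abs]
    push_cast
    ring
  rw [step1]
  have step2 : ∀ m : Fin 4 → F, Wsum χ E m * (starRingEnd ℂ) (Wsum χ E m)
      = ∑ u ∈ E, ∑ v ∈ E, χ (∑ i, m i * (u - v) i) := by
    intro m
    have hc : (starRingEnd ℂ) (Wsum χ E m) = ∑ v ∈ E, χ (-(∑ i, m i * v i)) := by
      rw [Wsum_def, map_sum]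
      exact Finset.sum_congr rfl fun v _ => conj_char _
    rw [hc, Wsum_def, Finset.sum_mul_sum]
    refine Finset.sum_congr rfl fun u _ => Finset.sum_congr rfl fun v _ => ?_
    rw [← AddChar.map_add_eq_mul]
    congr 1
    have hsub : ∑ i, m i * (u - v) i = ∑ i, (m i * u i - m i * v i) :=
      Finset.sum_congr rfl fun i _ => by simp only [Pi.sub_apply]; ring
    rw [hsub, Finset.sum_sub_distrib]
    ring
  rw [Finset.sum_congr rfl fun m _ => step2 m]
  rw [Finset.sum_comm]
  exact Finset.sum_congr rfl fun u _ => Finset.sum_comm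

lemma Wsum_total {χ : AddChar F ℂ} (hχ : χ ≠ 1) (E : Finset (Fin 4 → F)) :
    ∑ m : Fin 4 → F, Complex.abs (Wsum χ E m) ^ 2
      = (Fintype.card F : ℝ) ^ 4 * (E.card : ℝ) := by
  have h := Wsum_energy χ Finset.univ E
  have hinner : ∀ u ∈ E, ∀ v ∈ E, ∑ m : Fin 4 → F, χ (∑ i, m i * (u - v) i)
      = if v = u then (Fintype.card F : ℂ) ^ 4 else 0 := by
    intro u _ v _
    rw [char_sum_dot₁ hχ (u - v)]
    congr 1
    simp [sub_eq_zero, eq_comm]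
  rw [Finset.sum_congr rfl (fun u hu => Finset.sum_congr rfl (fun v hv => hinner u hu v hv))] at h
  have hcount : ∑ u ∈ E, ∑ v ∈ E, (if v = u then (Fintype.card F : ℂ) ^ 4 else 0)
      = (E.card : ℂ) * (Fintype.card F : ℂ) ^ 4 := by
    rw [Finset.sum_congr rfl fun u hu => Finset.sum_ite_eq' E u
      (fun _ => (Fintype.card F : ℂ) ^ 4)]
    rw [Finset.sum_congr rfl fun u hu => if_pos hu, Finset.sum_const, nsmul_eq_mul]
  rw [hcount] at h
  have : ((∑ m : Fin 4 → F, Complex.abs (Wsum χ E m) ^ 2 : ℝ) : ℂ)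
      = (((Fintype.card F : ℝ) ^ 4 * (E.card : ℝ) : ℝ) : ℂ) := by
    rw [h]; push_cast; ring
  exact Complex.ofReal_inj.mp this

lemma Wsum_restrict_le {χ : AddChar F ℂ} (hχ : χ ≠ 1) (hne2 : ringChar F ≠ 2)
    {b : Fin 4 → F} (hb : ∀ i, b i ≠ 0) (hq3 : (3 : ℝ) ≤ (Fintype.card F : ℝ))
    (E : Finset (Fin 4 → F)) :
    ∑ m ∈ quadSurf b, Complex.abs (Wsum χ E m) ^ 2
      ≤ (E.card : ℝ) * (2 * (Fintype.card F : ℝ) ^ 3)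
        + (E.card : ℝ) ^ 2 * (Fintype.card F : ℝ) ^ 2 := by
  have h := Wsum_energy χ (quadSurf b) E
  have hnn : (0 : ℝ) ≤ ∑ m ∈ quadSurf b, Complex.abs (Wsum χ E m) ^ 2 :=
    Finset.sum_nonneg fun m _ => by positivity
  have habs : ∑ m ∈ quadSurf b, Complex.abs (Wsum χ E m) ^ 2
      = Complex.abs (∑ u ∈ E, ∑ v ∈ E, ∑ m ∈ quadSurf b, χ (∑ i, m i * (u - v) i)) := by
    rw [← h, Complex.abs_ofReal, abs_of_nonneg hnn]
  rw [habs]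
  have hpoint : ∀ u ∈ E, ∀ v ∈ E,
      Complex.abs (∑ m ∈ quadSurf b, χ (∑ i, m i * (u - v) i))
      ≤ (if u = v then 2 * (Fintype.card F : ℝ) ^ 3 else 0) + (Fintype.card F : ℝ) ^ 2 := by
    intro u _ v _
    have hq2nn : (0:ℝ) ≤ (Fintype.card F : ℝ) ^ 2 := by positivity
    by_cases huv : u = v
    · rw [if_pos huv, huv]
      have : ∑ m ∈ quadSurf b, χ (∑ i, m i * (v - v) i) = ((quadSurf b).card : ℂ) := by
        have hz : ∀ m ∈ quadSurf b, χ (∑ i, m i * (v - v) i) = 1 := fun m _ => by simp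
        rw [Finset.sum_congr rfl hz, Finset.sum_const, nsmul_eq_mul, mul_one]
      rw [this, Complex.abs_natCast]
      linarith [quadSurf_card_up hχ hne2 hb hq3]
    · rw [if_neg huv, zero_add]
      have hz : u - v ≠ 0 := sub_ne_zero.mpr huv
      have hre : ∑ m ∈ quadSurf b, χ (∑ i, m i * (u - v) i)
          = ∑ x ∈ quadSurf b, χ (∑ i, (u - v) i * x i) := by
        refine Finset.sum_congr rfl fun m _ => ?_
        congr 1
        exact Finset.sum_congr rfl fun i _ => mul_comm _ _
      rw [hre]
      exact Tabs_le hχ hne2 hb hz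
  calc Complex.abs (∑ u ∈ E, ∑ v ∈ E, ∑ m ∈ quadSurf b, χ (∑ i, m i * (u - v) i))
      ≤ ∑ u ∈ E, Complex.abs (∑ v ∈ E, ∑ m ∈ quadSurf b, χ (∑ i, m i * (u - v) i)) :=
        Complex.abs.sum_le _ _
    _ ≤ ∑ u ∈ E, ∑ v ∈ E, Complex.abs (∑ m ∈ quadSurf b, χ (∑ i, m i * (u - v) i)) :=
        Finset.sum_le_sum fun u _ => Complex.abs.sum_le _ _
    _ ≤ ∑ u ∈ E, ∑ v ∈ E, ((if u = v then 2 * (Fintype.card F : ℝ) ^ 3 else 0) + (Fintype.card F : ℝ) ^ 2) :=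
        Finset.sum_le_sum fun u hu => Finset.sum_le_sum fun v hv => hpoint u hu v hv
    _ ≤ (E.card : ℝ) * (2 * (Fintype.card F : ℝ) ^ 3) + (E.card : ℝ) ^ 2 * (Fintype.card F : ℝ) ^ 2 := by
        have hsplit : ∀ u ∈ E, ∑ v ∈ E, ((if u = v then 2 * (Fintype.card F : ℝ) ^ 3 else 0) + (Fintype.card F : ℝ) ^ 2)
            = (∑ v ∈ E, (if u = v then 2 * (Fintype.card F : ℝ) ^ 3 else 0)) + (E.card : ℝ) * (Fintype.card F : ℝ) ^ 2 := by
          intro u _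
          rw [Finset.sum_add_distrib, Finset.sum_const, nsmul_eq_mul]
        rw [Finset.sum_congr rfl hsplit, Finset.sum_add_distrib, Finset.sum_const, nsmul_eq_mul]
        have h1 : ∀ u ∈ E, (∑ v ∈ E, (if u = v then 2 * (Fintype.card F : ℝ) ^ 3 else 0))
            ≤ 2 * (Fintype.card F : ℝ) ^ 3 := by
          intro u hu
          rw [Finset.sum_ite_eq E u (fun _ => 2 * (Fintype.card F : ℝ) ^ 3), if_pos hu]
        have h2 : ∑ u ∈ E, (∑ v ∈ E, (if u = v then 2 * (Fintype.card F : ℝ) ^ 3 else 0))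
            ≤ (E.card : ℝ) * (2 * (Fintype.card F : ℝ) ^ 3) := by
          calc ∑ u ∈ E, (∑ v ∈ E, (if u = v then 2 * (Fintype.card F : ℝ) ^ 3 else 0))
              ≤ ∑ u ∈ E, 2 * (Fintype.card F : ℝ) ^ 3 := Finset.sum_le_sum h1
            _ = (E.card : ℝ) * (2 * (Fintype.card F : ℝ) ^ 3) := by
                rw [Finset.sum_const, nsmul_eq_mul]
        nlinarith [h2]

lemma plancherel {χ : AddChar F ℂ} (hχ : χ ≠ 1) (c : (Fin 4 → F) → ℂ) :
    ∑ x : Fin 4 → F, Complex.abs (∑ m : Fin 4 → F, c m * χ (-(∑ i, m i * x i))) ^ 2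
      = (Fintype.card F : ℝ) ^ 4 * ∑ m : Fin 4 → F, Complex.abs (c m) ^ 2 := by
  set G : (Fin 4 → F) → ℂ := fun x => ∑ m : Fin 4 → F, c m * χ (-(∑ i, m i * x i)) with hG
  have key : ∑ x : Fin 4 → F, G x * (starRingEnd ℂ) (G x)
      = (Fintype.card F : ℂ) ^ 4 * ∑ m : Fin 4 → F, c m * (starRingEnd ℂ) (c m) := by
    have hexp : ∀ x : Fin 4 → F, G x * (starRingEnd ℂ) (G x)
        = ∑ m : Fin 4 → F, ∑ m' : Fin 4 → F,
            (c m * (starRingEnd ℂ) (c m')) * χ (∑ i, (m' - m) i * x i) := by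
      intro x
      have hconjG : (starRingEnd ℂ) (G x)
          = ∑ m' : Fin 4 → F, (starRingEnd ℂ) (c m') * χ (∑ i, m' i * x i) := by
        rw [hG, map_sum]
        refine Finset.sum_congr rfl fun m' _ => ?_
        rw [map_mul, conj_char, neg_neg]
      rw [hG, hconjG, Finset.sum_mul_sum]
      refine Finset.sum_congr rfl fun m _ => Finset.sum_congr rfl fun m' _ => ?_
      have hch : χ (-(∑ i, m i * x i)) * χ (∑ i, m' i * x i) = χ (∑ i, (m' - m) i * x i) := by
        rw [← AddChar.map_add_eq_mul]
        congr 1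
        have hsub : ∑ i, (m' - m) i * x i = ∑ i, (m' i * x i - m i * x i) :=
          Finset.sum_congr rfl fun i _ => by simp only [Pi.sub_apply]; ring
        rw [hsub, Finset.sum_sub_distrib]
        ring
      rw [← hch]; ring
    rw [Finset.sum_congr rfl fun x (_ : x ∈ Finset.univ) => hexp x]
    rw [Finset.sum_comm]
    have hswap : ∀ m : Fin 4 → F,
        ∑ x : Fin 4 → F, ∑ m' : Fin 4 → F,
            (c m * (starRingEnd ℂ) (c m')) * χ (∑ i, (m' - m) i * x i)
        = ∑ m' : Fin 4 → F, (c m * (starRingEnd ℂ) (c m'))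
            * ∑ x : Fin 4 → F, χ (∑ i, (m' - m) i * x i) := by
      intro m
      rw [Finset.sum_comm]
      exact Finset.sum_congr rfl fun m' _ => by rw [Finset.mul_sum]
    rw [Finset.sum_congr rfl fun m (_ : m ∈ Finset.univ) => hswap m]
    have hinner : ∀ m : Fin 4 → F,
        ∑ m' : Fin 4 → F, (c m * (starRingEnd ℂ) (c m'))
            * ∑ x : Fin 4 → F, χ (∑ i, (m' - m) i * x i)
        = (Fintype.card F : ℂ) ^ 4 * (c m * (starRingEnd ℂ) (c m)) := by
      intro m
      have : ∀ m' : Fin 4 → F, (c m * (starRingEnd ℂ) (c m'))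
            * ∑ x : Fin 4 → F, χ (∑ i, (m' - m) i * x i)
          = if m' = m then (Fintype.card F : ℂ) ^ 4 * (c m * (starRingEnd ℂ) (c m')) else 0 := by
        intro m'
        rw [char_sum_dot₂ hχ (m' - m)]
        by_cases hmm : m' = m
        · rw [if_pos (sub_eq_zero.mpr hmm), if_pos hmm]; ring
        · rw [if_neg (fun hc0 => hmm (sub_eq_zero.mp hc0)), if_neg hmm, mul_zero]
      rw [Finset.sum_congr rfl fun m' _ => this m']
      rw [Finset.sum_ite_eq' Finset.univ m
        (fun m' => (Fintype.card F : ℂ) ^ 4 * (c m * (starRingEnd ℂ) (c m'))),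
        if_pos (Finset.mem_univ m)]
    rw [Finset.sum_congr rfl fun m (_ : m ∈ Finset.univ) => hinner m, ← Finset.mul_sum]
  have hL : ((∑ x : Fin 4 → F, Complex.abs (G x) ^ 2 : ℝ) : ℂ)
      = (((Fintype.card F : ℝ) ^ 4 * ∑ m : Fin 4 → F, Complex.abs (c m) ^ 2 : ℝ) : ℂ) := by
    push_cast
    calc ∑ x : Fin 4 → F, ((Complex.abs (G x) : ℂ)) ^ 2
        = ∑ x : Fin 4 → F, G x * (starRingEnd ℂ) (G x) := by
          refine Finset.sum_congr rfl fun x _ => ?_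
          rw [Complex.mul_conj]
          norm_cast
          rw [Complex.sq_abs]
      _ = (Fintype.card F : ℂ) ^ 4 * ∑ m : Fin 4 → F, c m * (starRingEnd ℂ) (c m) := key
      _ = (Fintype.card F : ℂ) ^ 4 * ∑ m : Fin 4 → F, ((Complex.abs (c m) : ℂ)) ^ 2 := by
          congr 1
          refine Finset.sum_congr rfl fun m _ => ?_
          rw [Complex.mul_conj]
          norm_cast
          rw [Complex.sq_abs]
  exact Complex.ofReal_inj.mp hL

end Aux5

section Aux6
variable {F : Type} [Field F] [Fintype F] [DecidableEq F]

lemma convInd_repr (χ : AddChar F ℂ) (a : Fin 4 → F) (E : Finset (Fin 4 → F)) (x : Fin 4 → F) :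
    convInd χ a E x = ((Fintype.card F : ℂ) ^ 4)⁻¹ *
      ∑ m : Fin 4 → F, (brKernel χ a m * Wsum χ E m) * χ (-(∑ i, m i * x i)) := by
  unfold convInd brKernelHat
  congr 1
  have hsw : ∑ y : Fin 4 → F, (if x - y ∈ E then ∑ m : Fin 4 → F, brKernel χ a m * χ (-(∑ i, m i * y i)) else 0)
      = ∑ m : Fin 4 → F, ∑ y : Fin 4 → F, (if x - y ∈ E then brKernel χ a m * χ (-(∑ i, m i * y i)) else 0) := by
    rw [Finset.sum_comm]
    refine Finset.sum_congr rfl fun y _ => ?_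
    split_ifs with h
    · rfl
    · rw [Finset.sum_const_zero]
  rw [hsw]
  refine Finset.sum_congr rfl fun m _ => ?_
  have hre : ∑ y : Fin 4 → F, (if x - y ∈ E then brKernel χ a m * χ (-(∑ i, m i * y i)) else 0)
      = ∑ z : Fin 4 → F, (if z ∈ E then brKernel χ a m * (χ (∑ i, m i * z i) * χ (-(∑ i, m i * x i))) else 0) := by
    refine Fintype.sum_equiv (Equiv.subLeft x) _ _ fun y => ?_
    rw [show (Equiv.subLeft x) y = x - y from rfl]
    split_ifs with h
    · congr 1
      rw [← AddChar.map_add_eq_mul]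
      congr 1
      have hsub : ∑ i, m i * (x - y) i = ∑ i, (m i * x i - m i * y i) :=
        Finset.sum_congr rfl fun i _ => by simp only [Pi.sub_apply]; ring
      rw [hsub, Finset.sum_sub_distrib]
      ring
    · rfl
  rw [hre, Finset.sum_ite_mem, Finset.univ_inter, Wsum_def, Finset.mul_sum, Finset.sum_mul]
  refine Finset.sum_congr rfl fun z _ => by ring

lemma sigmaInv_zero {χ : AddChar F ℂ} {a : Fin 4 → F}
    (hS0 : ((quadSurf a).card : ℂ) ≠ 0) : sigmaInv χ a 0 = 1 := by
  unfold sigmaInv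
  have : ∀ y ∈ quadSurf a, χ (∑ i, (0 : Fin 4 → F) i * y i) = 1 := fun y _ => by simp
  rw [Finset.sum_congr rfl this, Finset.sum_const, nsmul_eq_mul, mul_one, inv_mul_cancel₀ hS0]

lemma sigmaInv_abs_le {χ : AddChar F ℂ} (hχ : χ ≠ 1) (hne2 : ringChar F ≠ 2)
    {a : Fin 4 → F} (ha : ∀ i, a i ≠ 0) {m : Fin 4 → F} (hm : m ≠ 0) :
    Complex.abs (sigmaInv χ a m)
      ≤ (((quadSurf a).card : ℝ))⁻¹ * (Fintype.card F : ℝ) ^ 2 := by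
  unfold sigmaInv
  rw [map_mul, map_inv₀, Complex.abs_natCast]
  exact mul_le_mul_of_nonneg_left (Tabs_le hχ hne2 ha hm) (by positivity)

lemma sigmaInv_abs_le_off {χ : AddChar F ℂ} (hχ : χ ≠ 1) (hne2 : ringChar F ≠ 2)
    {a : Fin 4 → F} (ha : ∀ i, a i ≠ 0) {m : Fin 4 → F}
    (hm : m ∉ dualSurf a) :
    Complex.abs (sigmaInv χ a m)
      ≤ (((quadSurf a).card : ℝ))⁻¹ * (Fintype.card F : ℝ) := by
  have hcond : (∑ i, m i ^ 2 * (a i)⁻¹) ≠ 0 := by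
    intro h
    exact hm (by unfold dualSurf; simp [h])
  unfold sigmaInv
  rw [map_mul, map_inv₀, Complex.abs_natCast]
  exact mul_le_mul_of_nonneg_left (Tabs_le_off hχ hne2 ha hcond) (by positivity)

lemma zero_mem_dualSurf (a : Fin 4 → F) : (0 : Fin 4 → F) ∈ dualSurf a := by
  unfold dualSurf; simp

lemma convInd_counting {χ : AddChar F ℂ} (hχ : χ ≠ 1) {a : Fin 4 → F}
    (hS0 : ((quadSurf a).card : ℂ) ≠ 0) (E : Finset (Fin 4 → F)) (x : Fin 4 → F) :
    convInd χ a E x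
      = ((quadSurf a).card : ℂ)⁻¹ * (((quadSurf a).filter (fun y => x - y ∈ E)).card : ℂ)
        - ((Fintype.card F : ℂ) ^ 4)⁻¹ * (E.card : ℂ) := by
  have hK : ∀ y : Fin 4 → F, brKernelHat χ a y
      = (Fintype.card F : ℂ) ^ 4 * ((quadSurf a).card : ℂ)⁻¹ * (if y ∈ quadSurf a then 1 else 0)
        - 1 := by
    intro y
    unfold brKernelHat
    have hsplit : ∑ m : Fin 4 → F, brKernel χ a m * χ (-(∑ i, m i * y i))
        = (∑ m : Fin 4 → F, sigmaInv χ a m * χ (-(∑ i, m i * y i))) - sigmaInv χ a 0 := by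
      have h1 : ∀ m : Fin 4 → F, brKernel χ a m * χ (-(∑ i, m i * y i))
          = sigmaInv χ a m * χ (-(∑ i, m i * y i))
            - (if m = 0 then sigmaInv χ a 0 * χ (-(∑ i, (0 : Fin 4 → F) i * y i)) else 0) := by
        intro m
        unfold brKernel
        split_ifs with h
        · rw [h]; ring
        · ring
      rw [Finset.sum_congr rfl fun m _ => h1 m, Finset.sum_sub_distrib]
      congr 1
      rw [Finset.sum_ite_eq' Finset.univ (0 : Fin 4 → F)
        (fun _ => sigmaInv χ a 0 * χ (-(∑ i, (0 : Fin 4 → F) i * y i))), if_pos (Finset.mem_univ _)]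
      simp
    rw [hsplit, sigmaInv_zero hS0]
    congr 1
    unfold sigmaInv
    have hper : ∀ m : Fin 4 → F,
        ((quadSurf a).card : ℂ)⁻¹ * (∑ z ∈ quadSurf a, χ (∑ i, m i * z i)) * χ (-(∑ i, m i * y i))
        = ((quadSurf a).card : ℂ)⁻¹ * ∑ z ∈ quadSurf a, χ (∑ i, m i * (z - y) i) := by
      intro m
      rw [mul_assoc, Finset.sum_mul]
      congr 1
      refine Finset.sum_congr rfl fun z _ => ?_
      rw [← AddChar.map_add_eq_mul]
      congr 1
      have hsub : ∑ i, m i * (z - y) i = ∑ i, (m i * z i - m i * y i) :=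
        Finset.sum_congr rfl fun i _ => by simp only [Pi.sub_apply]; ring
      rw [hsub, Finset.sum_sub_distrib]
      ring
    rw [Finset.sum_congr rfl fun m (_ : m ∈ Finset.univ) => hper m, ← Finset.mul_sum,
      Finset.sum_comm]
    have hinner : ∀ z ∈ quadSurf a, ∑ m : Fin 4 → F, χ (∑ i, m i * (z - y) i)
        = if z = y then (Fintype.card F : ℂ) ^ 4 else 0 := by
      intro z _
      rw [char_sum_dot₁ hχ (z - y)]
      congr 1
      simp [sub_eq_zero]
    rw [Finset.sum_congr rfl hinner, Finset.sum_ite_eq' (quadSurf a) y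
      (fun _ => (Fintype.card F : ℂ) ^ 4)]
    split_ifs with h <;> ring
  unfold convInd
  rw [Finset.sum_congr rfl fun y (_ : y ∈ Finset.univ) => by rw [hK y]]
  have hsum : ∑ y : Fin 4 → F, (if x - y ∈ E then
      (Fintype.card F : ℂ) ^ 4 * ((quadSurf a).card : ℂ)⁻¹ * (if y ∈ quadSurf a then 1 else 0) - 1 else 0)
      = (Fintype.card F : ℂ) ^ 4 * ((quadSurf a).card : ℂ)⁻¹
          * (((quadSurf a).filter (fun y => x - y ∈ E)).card : ℂ)
        - (E.card : ℂ) := by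
    have hterm : ∀ y : Fin 4 → F, (if x - y ∈ E then
        (Fintype.card F : ℂ) ^ 4 * ((quadSurf a).card : ℂ)⁻¹ * (if y ∈ quadSurf a then 1 else 0) - 1 else 0)
        = (Fintype.card F : ℂ) ^ 4 * ((quadSurf a).card : ℂ)⁻¹
            * (if y ∈ quadSurf a ∧ x - y ∈ E then 1 else 0)
          - (if x - y ∈ E then 1 else 0) := by
      intro y
      by_cases h1 : x - y ∈ E <;> by_cases h2 : y ∈ quadSurf a <;>
        simp [h1, h2] <;> ring
    rw [Finset.sum_congr rfl fun y _ => hterm y, Finset.sum_sub_distrib]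
    congr 1
    · rw [← Finset.mul_sum]
      congr 1
      rw [Finset.sum_boole]
      congr 2
      ext y
      simp [Finset.mem_filter, quadSurf, and_comm]
    · -- ∑_y 1_{x-y∈E} = E.card
      have : ∑ y : Fin 4 → F, (if x - y ∈ E then (1 : ℂ) else 0)
          = ∑ z : Fin 4 → F, (if z ∈ E then (1 : ℂ) else 0) := by
        refine Fintype.sum_equiv (Equiv.subLeft x) _ _ fun y => ?_
        rw [show (Equiv.subLeft x) y = x - y from rfl]
      rw [this, Finset.sum_boole]
      congr 1
      simp
  rw [hsum]
  have hq4 : ((Fintype.card F : ℂ)) ^ 4 ≠ 0 :=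
    pow_ne_zero _ (by exact_mod_cast (Fintype.card_ne_zero (α := F)))
  field_simp

end Aux6

section Aux7
variable {F : Type} [Field F] [Fintype F] [DecidableEq F]

lemma convInd_abs_le {χ : AddChar F ℂ} (hχ : χ ≠ 1) (hne2 : ringChar F ≠ 2)
    {a : Fin 4 → F} (ha : ∀ i, a i ≠ 0) (hq3 : (3 : ℝ) ≤ (Fintype.card F : ℝ))
    (E : Finset (Fin 4 → F)) (x : Fin 4 → F) :
    Complex.abs (convInd χ a E x)
      ≤ (((quadSurf a).card : ℝ))⁻¹ * min (E.card : ℝ) ((quadSurf a).card : ℝ)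
        + (((Fintype.card F : ℝ)) ^ 4)⁻¹ * (E.card : ℝ) := by
  have hSpos : (0 : ℝ) < ((quadSurf a).card : ℝ) := by
    have hSlow := quadSurf_card_low hχ hne2 ha hq3
    nlinarith [pow_pos (show (0:ℝ) < (Fintype.card F : ℝ) by linarith) 3]
  have hS0 : ((quadSurf a).card : ℂ) ≠ 0 := by
    have : ((quadSurf a).card : ℝ) ≠ 0 := hSpos.ne'
    exact_mod_cast this
  rw [convInd_counting hχ hS0 E x]
  set N : ℕ := ((quadSurf a).filter (fun y => x - y ∈ E)).card with hN
  have hNS : (N : ℝ) ≤ ((quadSurf a).card : ℝ) := by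
    exact_mod_cast Finset.card_filter_le _ _
  have hNE : (N : ℝ) ≤ (E.card : ℝ) := by
    have : N ≤ E.card := by
      apply Finset.card_le_card_of_injOn (fun y => x - y)
      · intro y hy
        exact (Finset.mem_filter.mp hy).2
      · intro y _ y' _ h
        have : x - y = x - y' := h
        have := sub_right_injective this
        exact this
    exact_mod_cast this
  have habs : Complex.abs (((quadSurf a).card : ℂ)⁻¹ * (N : ℂ)
        - ((Fintype.card F : ℂ) ^ 4)⁻¹ * (E.card : ℂ))
      ≤ (((quadSurf a).card : ℝ))⁻¹ * (N : ℝ)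
        + (((Fintype.card F : ℝ)) ^ 4)⁻¹ * (E.card : ℝ) := by
    refine (AbsoluteValue.sub_le_add _ _ _).trans ?_
    have h1 : Complex.abs (((quadSurf a).card : ℂ)⁻¹ * (N : ℂ))
        = (((quadSurf a).card : ℝ))⁻¹ * (N : ℝ) := by
      rw [map_mul, map_inv₀, Complex.abs_natCast, Complex.abs_natCast]
    have h2 : Complex.abs (((Fintype.card F : ℂ) ^ 4)⁻¹ * (E.card : ℂ))
        = (((Fintype.card F : ℝ)) ^ 4)⁻¹ * (E.card : ℝ) := by
      rw [map_mul, map_inv₀, map_pow, Complex.abs_natCast, Complex.abs_natCast]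
    rw [h1, h2]
  refine habs.trans ?_
  have hmin : (N : ℝ) ≤ min (E.card : ℝ) ((quadSurf a).card : ℝ) := le_min hNE hNS
  have := mul_le_mul_of_nonneg_left hmin (by positivity : (0:ℝ) ≤ (((quadSurf a).card : ℝ))⁻¹)
  linarith

lemma convInd_abs_le_A {χ : AddChar F ℂ} (hχ : χ ≠ 1) (hne2 : ringChar F ≠ 2)
    {a : Fin 4 → F} (ha : ∀ i, a i ≠ 0) (hq3 : (3 : ℝ) ≤ (Fintype.card F : ℝ))
    (E : Finset (Fin 4 → F)) (x : Fin 4 → F) :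
    Complex.abs (convInd χ a E x)
      ≤ 2 * (E.card : ℝ) * (((Fintype.card F : ℝ)) ^ 3)⁻¹ := by
  have hQ0 : (0 : ℝ) < (Fintype.card F : ℝ) := by linarith
  have hSlow := quadSurf_card_low hχ hne2 ha hq3
  have hSpos : (0 : ℝ) < ((quadSurf a).card : ℝ) := by
    nlinarith [pow_pos hQ0 3]
  refine (convInd_abs_le hχ hne2 ha hq3 E x).trans ?_
  have h1 : (((quadSurf a).card : ℝ))⁻¹ * min (E.card : ℝ) ((quadSurf a).card : ℝ)
      ≤ (3 / 2) * ((Fintype.card F : ℝ) ^ 3)⁻¹ * (E.card : ℝ) := by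
    have hmin : min (E.card : ℝ) ((quadSurf a).card : ℝ) ≤ (E.card : ℝ) := min_le_left _ _
    have hinv : (((quadSurf a).card : ℝ))⁻¹ ≤ ((2 / 3) * (Fintype.card F : ℝ) ^ 3)⁻¹ :=
      inv_anti₀ (by positivity) hSlow
    have hinv2 : ((2 / 3) * (Fintype.card F : ℝ) ^ 3)⁻¹
        = (3 / 2) * ((Fintype.card F : ℝ) ^ 3)⁻¹ := by
      rw [mul_inv]
      norm_num
    calc (((quadSurf a).card : ℝ))⁻¹ * min (E.card : ℝ) ((quadSurf a).card : ℝ)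
        ≤ (((quadSurf a).card : ℝ))⁻¹ * (E.card : ℝ) :=
          mul_le_mul_of_nonneg_left hmin (by positivity)
      _ ≤ ((2 / 3) * (Fintype.card F : ℝ) ^ 3)⁻¹ * (E.card : ℝ) :=
          mul_le_mul_of_nonneg_right hinv (by positivity)
      _ = (3 / 2) * ((Fintype.card F : ℝ) ^ 3)⁻¹ * (E.card : ℝ) := by rw [hinv2]
  have h2 : (((Fintype.card F : ℝ)) ^ 4)⁻¹ * (E.card : ℝ)
      ≤ (1 / 2) * ((Fintype.card F : ℝ) ^ 3)⁻¹ * (E.card : ℝ) := by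
    have : (((Fintype.card F : ℝ)) ^ 4)⁻¹ ≤ (1 / 2) * ((Fintype.card F : ℝ) ^ 3)⁻¹ := by
      have hineq : (2 : ℝ) * (Fintype.card F : ℝ) ^ 3 ≤ (Fintype.card F : ℝ) ^ 4 := by
        nlinarith [mul_le_mul_of_nonneg_right hq3 (pow_pos hQ0 3).le, (pow_pos hQ0 3).le]
      have h48 : ((Fintype.card F : ℝ) ^ 4)⁻¹ ≤ ((2 : ℝ) * (Fintype.card F : ℝ) ^ 3)⁻¹ :=
        inv_anti₀ (by positivity) hineq
      calc ((Fintype.card F : ℝ) ^ 4)⁻¹ ≤ ((2 : ℝ) * (Fintype.card F : ℝ) ^ 3)⁻¹ := h48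
        _ = (1 / 2) * ((Fintype.card F : ℝ) ^ 3)⁻¹ := by rw [mul_inv]; norm_num
    exact mul_le_mul_of_nonneg_right this (by positivity)
  linarith

lemma convInd_abs_le_B {χ : AddChar F ℂ} (hχ : χ ≠ 1) (hne2 : ringChar F ≠ 2)
    {a : Fin 4 → F} (ha : ∀ i, a i ≠ 0) (hq3 : (3 : ℝ) ≤ (Fintype.card F : ℝ))
    {E : Finset (Fin 4 → F)} (he4 : (E.card : ℝ) ≤ (Fintype.card F : ℝ) ^ 4) (x : Fin 4 → F) :
    Complex.abs (convInd χ a E x) ≤ 2 := by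
  have hQ0 : (0 : ℝ) < (Fintype.card F : ℝ) := by linarith
  have hSlow := quadSurf_card_low hχ hne2 ha hq3
  have hSpos : (0 : ℝ) < ((quadSurf a).card : ℝ) := by
    nlinarith [pow_pos hQ0 3]
  refine (convInd_abs_le hχ hne2 ha hq3 E x).trans ?_
  have h1 : (((quadSurf a).card : ℝ))⁻¹ * min (E.card : ℝ) ((quadSurf a).card : ℝ) ≤ 1 := by
    rw [inv_mul_le_iff₀ hSpos, mul_one]
    exact min_le_right _ _
  have h2 : (((Fintype.card F : ℝ)) ^ 4)⁻¹ * (E.card : ℝ) ≤ 1 := by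
    rw [inv_mul_le_iff₀ (by positivity : (0:ℝ) < (Fintype.card F : ℝ)^4), mul_one]
    exact he4
  linarith

lemma convInd_l2_eq {χ : AddChar F ℂ} (hχ : χ ≠ 1) (a : Fin 4 → F)
    (E : Finset (Fin 4 → F)) :
    ∑ x : Fin 4 → F, Complex.abs (convInd χ a E x) ^ 2
      = (((Fintype.card F : ℝ)) ^ 4)⁻¹
        * ∑ m : Fin 4 → F, (Complex.abs (brKernel χ a m) * Complex.abs (Wsum χ E m)) ^ 2 := by
  have hstep : ∀ x : Fin 4 → F, Complex.abs (convInd χ a E x) ^ 2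
      = ((((Fintype.card F : ℝ)) ^ 4)⁻¹) ^ 2
        * Complex.abs (∑ m : Fin 4 → F, (brKernel χ a m * Wsum χ E m) * χ (-(∑ i, m i * x i))) ^ 2 := by
    intro x
    rw [convInd_repr χ a E x, map_mul, map_inv₀, map_pow, Complex.abs_natCast, mul_pow]
  rw [Finset.sum_congr rfl fun x (_ : x ∈ Finset.univ) => hstep x, ← Finset.mul_sum]
  rw [plancherel hχ (fun m => brKernel χ a m * Wsum χ E m)]
  have hq4 : ((Fintype.card F : ℝ)) ^ 4 ≠ 0 := by
    have : (0:ℝ) < (Fintype.card F : ℝ) := by exact_mod_cast Fintype.card_pos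
    positivity
  have hconst : ((((Fintype.card F : ℝ)) ^ 4)⁻¹) ^ 2 * ((Fintype.card F : ℝ) ^ 4)
      = (((Fintype.card F : ℝ)) ^ 4)⁻¹ := by
    field_simp
  rw [← mul_assoc, hconst]
  congr 1
  exact Finset.sum_congr rfl fun m _ => by rw [map_mul]

lemma convInd_l2_sum_le {χ : AddChar F ℂ} (hχ : χ ≠ 1) (hne2 : ringChar F ≠ 2)
    {a : Fin 4 → F} (ha : ∀ i, a i ≠ 0) (hq3 : (3 : ℝ) ≤ (Fintype.card F : ℝ))
    (E : Finset (Fin 4 → F)) :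
    ∑ m : Fin 4 → F, (Complex.abs (brKernel χ a m) * Complex.abs (Wsum χ E m)) ^ 2
      ≤ ((((quadSurf a).card : ℝ))⁻¹ * (Fintype.card F : ℝ) ^ 2) ^ 2
          * ((E.card : ℝ) * (2 * (Fintype.card F : ℝ) ^ 3)
              + (E.card : ℝ) ^ 2 * (Fintype.card F : ℝ) ^ 2)
        + ((((quadSurf a).card : ℝ))⁻¹ * (Fintype.card F : ℝ)) ^ 2
          * ((Fintype.card F : ℝ) ^ 4 * (E.card : ℝ)) := by
  have hQ0 : (0 : ℝ) < (Fintype.card F : ℝ) := by linarith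
  have hSlow := quadSurf_card_low hχ hne2 ha hq3
  have hSpos : (0 : ℝ) < ((quadSurf a).card : ℝ) := by
    nlinarith [pow_pos hQ0 3]
  have hsplit := Finset.sum_filter_add_sum_filter_not Finset.univ
    (fun m : Fin 4 → F => m ∈ dualSurf a)
    (fun m => (Complex.abs (brKernel χ a m) * Complex.abs (Wsum χ E m)) ^ 2)
  rw [← hsplit]
  have hpart1 : ∑ m ∈ Finset.univ.filter (fun m : Fin 4 → F => m ∈ dualSurf a),
        (Complex.abs (brKernel χ a m) * Complex.abs (Wsum χ E m)) ^ 2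
      ≤ ((((quadSurf a).card : ℝ))⁻¹ * (Fintype.card F : ℝ) ^ 2) ^ 2
          * ((E.card : ℝ) * (2 * (Fintype.card F : ℝ) ^ 3)
              + (E.card : ℝ) ^ 2 * (Fintype.card F : ℝ) ^ 2) := by
    have hKbd : ∀ m : Fin 4 → F,
        (Complex.abs (brKernel χ a m) * Complex.abs (Wsum χ E m)) ^ 2
        ≤ ((((quadSurf a).card : ℝ))⁻¹ * (Fintype.card F : ℝ) ^ 2) ^ 2
            * Complex.abs (Wsum χ E m) ^ 2 := by
      intro m
      have hW : (0:ℝ) ≤ Complex.abs (Wsum χ E m) := Complex.abs.nonneg _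
      have hK : Complex.abs (brKernel χ a m)
          ≤ (((quadSurf a).card : ℝ))⁻¹ * (Fintype.card F : ℝ) ^ 2 := by
        unfold brKernel
        split_ifs with h
        · simp only [map_zero]
          positivity
        · exact sigmaInv_abs_le hχ hne2 ha h
      calc (Complex.abs (brKernel χ a m) * Complex.abs (Wsum χ E m)) ^ 2
          ≤ ((((quadSurf a).card : ℝ))⁻¹ * (Fintype.card F : ℝ) ^ 2 * Complex.abs (Wsum χ E m)) ^ 2 :=
            pow_le_pow_left₀ (by positivity) (mul_le_mul_of_nonneg_right hK hW) 2
        _ = ((((quadSurf a).card : ℝ))⁻¹ * (Fintype.card F : ℝ) ^ 2) ^ 2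
              * Complex.abs (Wsum χ E m) ^ 2 := by rw [mul_pow]
    calc ∑ m ∈ Finset.univ.filter (fun m : Fin 4 → F => m ∈ dualSurf a),
          (Complex.abs (brKernel χ a m) * Complex.abs (Wsum χ E m)) ^ 2
        ≤ ∑ m ∈ Finset.univ.filter (fun m : Fin 4 → F => m ∈ dualSurf a),
            ((((quadSurf a).card : ℝ))⁻¹ * (Fintype.card F : ℝ) ^ 2) ^ 2
              * Complex.abs (Wsum χ E m) ^ 2 :=
          Finset.sum_le_sum fun m _ => hKbd m
      _ = ((((quadSurf a).card : ℝ))⁻¹ * (Fintype.card F : ℝ) ^ 2) ^ 2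
            * ∑ m ∈ dualSurf a, Complex.abs (Wsum χ E m) ^ 2 := by
          rw [← Finset.mul_sum]
          congr 2
          simp
      _ ≤ _ := by
          refine mul_le_mul_of_nonneg_left ?_ (by positivity)
          have hdual : dualSurf a = quadSurf (fun i => (a i)⁻¹) := dualSurf_eq_quadSurf a
          rw [hdual]
          exact Wsum_restrict_le hχ hne2 (fun i => inv_ne_zero (ha i)) hq3 E
  have hpart2 : ∑ m ∈ Finset.univ.filter (fun m : Fin 4 → F => ¬ m ∈ dualSurf a),
        (Complex.abs (brKernel χ a m) * Complex.abs (Wsum χ E m)) ^ 2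
      ≤ ((((quadSurf a).card : ℝ))⁻¹ * (Fintype.card F : ℝ)) ^ 2
          * ((Fintype.card F : ℝ) ^ 4 * (E.card : ℝ)) := by
    have hKbd : ∀ m : Fin 4 → F, m ∉ dualSurf a →
        (Complex.abs (brKernel χ a m) * Complex.abs (Wsum χ E m)) ^ 2
        ≤ ((((quadSurf a).card : ℝ))⁻¹ * (Fintype.card F : ℝ)) ^ 2
            * Complex.abs (Wsum χ E m) ^ 2 := by
      intro m hm
      have hm0 : m ≠ 0 := fun h => hm (h ▸ zero_mem_dualSurf a)
      have hW : (0:ℝ) ≤ Complex.abs (Wsum χ E m) := Complex.abs.nonneg _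
      have hK : Complex.abs (brKernel χ a m)
          ≤ (((quadSurf a).card : ℝ))⁻¹ * (Fintype.card F : ℝ) := by
        unfold brKernel
        rw [if_neg hm0]
        exact sigmaInv_abs_le_off hχ hne2 ha hm
      calc (Complex.abs (brKernel χ a m) * Complex.abs (Wsum χ E m)) ^ 2
          ≤ ((((quadSurf a).card : ℝ))⁻¹ * (Fintype.card F : ℝ) * Complex.abs (Wsum χ E m)) ^ 2 :=
            pow_le_pow_left₀ (by positivity) (mul_le_mul_of_nonneg_right hK hW) 2
        _ = ((((quadSurf a).card : ℝ))⁻¹ * (Fintype.card F : ℝ)) ^ 2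
              * Complex.abs (Wsum χ E m) ^ 2 := by rw [mul_pow]
    calc ∑ m ∈ Finset.univ.filter (fun m : Fin 4 → F => ¬ m ∈ dualSurf a),
          (Complex.abs (brKernel χ a m) * Complex.abs (Wsum χ E m)) ^ 2
        ≤ ∑ m ∈ Finset.univ.filter (fun m : Fin 4 → F => ¬ m ∈ dualSurf a),
            ((((quadSurf a).card : ℝ))⁻¹ * (Fintype.card F : ℝ)) ^ 2
              * Complex.abs (Wsum χ E m) ^ 2 :=
          Finset.sum_le_sum fun m hm => hKbd m (Finset.mem_filter.mp hm).2
      _ = ((((quadSurf a).card : ℝ))⁻¹ * (Fintype.card F : ℝ)) ^ 2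
            * ∑ m ∈ Finset.univ.filter (fun m : Fin 4 → F => ¬ m ∈ dualSurf a),
                Complex.abs (Wsum χ E m) ^ 2 := by rw [← Finset.mul_sum]
      _ ≤ ((((quadSurf a).card : ℝ))⁻¹ * (Fintype.card F : ℝ)) ^ 2
            * ∑ m : Fin 4 → F, Complex.abs (Wsum χ E m) ^ 2 := by
          refine mul_le_mul_of_nonneg_left ?_ (by positivity)
          exact Finset.sum_le_sum_of_subset_of_nonneg (Finset.filter_subset _ _)
            (fun m _ _ => by positivity)
      _ = ((((quadSurf a).card : ℝ))⁻¹ * (Fintype.card F : ℝ)) ^ 2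
            * ((Fintype.card F : ℝ) ^ 4 * (E.card : ℝ)) := by rw [Wsum_total hχ E]
  exact add_le_add hpart1 hpart2

lemma convInd_l2_sum_le_unif {χ : AddChar F ℂ} (hχ : χ ≠ 1) (hne2 : ringChar F ≠ 2)
    {a : Fin 4 → F} (ha : ∀ i, a i ≠ 0) (hq3 : (3 : ℝ) ≤ (Fintype.card F : ℝ))
    (E : Finset (Fin 4 → F)) :
    ∑ m : Fin 4 → F, (Complex.abs (brKernel χ a m) * Complex.abs (Wsum χ E m)) ^ 2
      ≤ ((((quadSurf a).card : ℝ))⁻¹ * (Fintype.card F : ℝ) ^ 2) ^ 2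
          * ((Fintype.card F : ℝ) ^ 4 * (E.card : ℝ)) := by
  have hQ0 : (0 : ℝ) < (Fintype.card F : ℝ) := by linarith
  have hKbd : ∀ m : Fin 4 → F,
      (Complex.abs (brKernel χ a m) * Complex.abs (Wsum χ E m)) ^ 2
      ≤ ((((quadSurf a).card : ℝ))⁻¹ * (Fintype.card F : ℝ) ^ 2) ^ 2
          * Complex.abs (Wsum χ E m) ^ 2 := by
    intro m
    have hW : (0:ℝ) ≤ Complex.abs (Wsum χ E m) := Complex.abs.nonneg _
    have hK : Complex.abs (brKernel χ a m)
        ≤ (((quadSurf a).card : ℝ))⁻¹ * (Fintype.card F : ℝ) ^ 2 := by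
      unfold brKernel
      split_ifs with h
      · simp only [map_zero]
        positivity
      · exact sigmaInv_abs_le hχ hne2 ha h
    calc (Complex.abs (brKernel χ a m) * Complex.abs (Wsum χ E m)) ^ 2
        ≤ ((((quadSurf a).card : ℝ))⁻¹ * (Fintype.card F : ℝ) ^ 2 * Complex.abs (Wsum χ E m)) ^ 2 :=
          pow_le_pow_left₀ (by positivity) (mul_le_mul_of_nonneg_right hK hW) 2
      _ = ((((quadSurf a).card : ℝ))⁻¹ * (Fintype.card F : ℝ) ^ 2) ^ 2
            * Complex.abs (Wsum χ E m) ^ 2 := by rw [mul_pow]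
  calc ∑ m : Fin 4 → F, (Complex.abs (brKernel χ a m) * Complex.abs (Wsum χ E m)) ^ 2
      ≤ ∑ m : Fin 4 → F, ((((quadSurf a).card : ℝ))⁻¹ * (Fintype.card F : ℝ) ^ 2) ^ 2
          * Complex.abs (Wsum χ E m) ^ 2 := Finset.sum_le_sum fun m _ => hKbd m
    _ = ((((quadSurf a).card : ℝ))⁻¹ * (Fintype.card F : ℝ) ^ 2) ^ 2
          * ∑ m : Fin 4 → F, Complex.abs (Wsum χ E m) ^ 2 := by rw [← Finset.mul_sum]
    _ = _ := by rw [Wsum_total hχ E]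

end Aux7

section Final

lemma sum_six_le {α : Type} [Fintype α] (g : α → ℂ) {B : ℝ}
    (hB0 : 0 ≤ B) (hB : ∀ x, Complex.abs (g x) ≤ B) :
    ∑ x : α, Complex.abs (g x) ^ (6:ℕ)
      ≤ B ^ 4 * ∑ x : α, Complex.abs (g x) ^ 2 := by
  rw [Finset.mul_sum]
  refine Finset.sum_le_sum fun x _ => ?_
  have h0 : (0:ℝ) ≤ Complex.abs (g x) := Complex.abs.nonneg _
  calc Complex.abs (g x) ^ (6:ℕ) = Complex.abs (g x) ^ 4 * Complex.abs (g x) ^ 2 := by ring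
    _ ≤ B ^ 4 * Complex.abs (g x) ^ 2 :=
        mul_le_mul_of_nonneg_right (pow_le_pow_left₀ h0 (hB x) 4) (by positivity)

lemma Lnorm6_le_of {α : Type} [Fintype α] (g : α → ℂ) {Y : ℝ} (hY : 0 ≤ Y)
    (h : (Fintype.card α : ℝ)⁻¹ * ∑ x : α, Complex.abs (g x) ^ (6:ℕ) ≤ Y ^ (6:ℕ)) :
    Lnorm 6 g ≤ Y := by
  unfold Lnorm
  simp only [← Complex.abs_def]
  have hconv : ∀ x : α, Complex.abs (g x) ^ (6:ℝ) = Complex.abs (g x) ^ (6:ℕ) := fun x => by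
    rw [show ((6:ℝ)) = ((6:ℕ):ℝ) by norm_num, Real.rpow_natCast]
  rw [Finset.sum_congr rfl fun x (_ : x ∈ Finset.univ) => hconv x]
  have hX0 : (0:ℝ) ≤ (Fintype.card α : ℝ)⁻¹ * ∑ x : α, Complex.abs (g x) ^ (6:ℕ) := by
    positivity
  calc ((Fintype.card α : ℝ)⁻¹ * ∑ x : α, Complex.abs (g x) ^ (6:ℕ)) ^ ((1:ℝ)/6)
      ≤ (Y ^ (6:ℕ)) ^ ((1:ℝ)/6) := Real.rpow_le_rpow hX0 h (by norm_num)
    _ = Y := by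
        rw [← Real.rpow_natCast Y 6, ← Real.rpow_mul hY]
        norm_num

lemma rpow_six_eq {Q : ℝ} (hQ : 0 < Q) {r : ℝ} {n : ℕ} (h : r * 6 = -(n:ℝ)) :
    (Q ^ r) ^ (6:ℕ) = (Q ^ n)⁻¹ := by
  rw [← Real.rpow_natCast (Q ^ r) 6, ← Real.rpow_mul hQ.le]
  rw [show ((6:ℕ):ℝ) = (6:ℝ) by norm_num, h, Real.rpow_neg hQ.le, Real.rpow_natCast]

lemma rpow_fivesixth_eq {e : ℝ} (he : 0 ≤ e) : (e ^ ((5:ℝ)/6)) ^ (6:ℕ) = e ^ (5:ℕ) := by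
  rw [← Real.rpow_natCast (e ^ ((5:ℝ)/6)) 6, ← Real.rpow_mul he]
  have h56 : (5:ℝ)/6 * ((6:ℕ):ℝ) = ((5:ℕ):ℝ) := by norm_num
  rw [h56, Real.rpow_natCast]

end Final


set_option maxHeartbeats 2000000 in
/-- L⁶ bounds for E ∗ K̂ in dimension 4, in three ranges of |E|. -/
theorem convInd_l6_bound_dim4 :
    ∃ C : ℝ, 0 < C ∧
      ∀ (F : Type) [Field F] [Fintype F] [DecidableEq F],
        Odd (Fintype.card F) →
        ∀ (χ : AddChar F ℂ), χ ≠ 1 →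
        ∀ (a : Fin 4 → F), (∀ i, a i ≠ 0) →
        ∀ (E : Finset (Fin 4 → F)),
          ((1 ≤ (E.card : ℝ) ∧ (E.card : ℝ) ≤ (Fintype.card F : ℝ)) →
            Lnorm 6 (convInd χ a E)
              ≤ C * (Fintype.card F : ℝ) ^ (-(19 : ℝ) / 6)
                  * (E.card : ℝ) ^ ((5 : ℝ) / 6)) ∧
          (((Fintype.card F : ℝ) ≤ (E.card : ℝ) ∧
              (E.card : ℝ) ≤ (Fintype.card F : ℝ) ^ 2) →
            Lnorm 6 (convInd χ a E)
              ≤ C * (Fintype.card F : ℝ) ^ (-(10 : ℝ) / 3) * (E.card : ℝ)) ∧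
          (((Fintype.card F : ℝ) ^ 2 ≤ (E.card : ℝ) ∧
              (E.card : ℝ) ≤ (Fintype.card F : ℝ) ^ 4) →
            Lnorm 6 (convInd χ a E)
              ≤ C * (Fintype.card F : ℝ) ^ (-(3 : ℝ))
                  * (E.card : ℝ) ^ ((5 : ℝ) / 6)) := by
  refine ⟨4, by norm_num, ?_⟩
  intro F _ _ _ hodd χ hχ a ha E
  have hne2 : ringChar F ≠ 2 := by
    intro h
    have h2 := FiniteField.even_card_of_char_two h
    obtain ⟨k, hk⟩ := hodd
    omega
  have hq2 : 2 ≤ Fintype.card F := Fintype.one_lt_card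
  have hq3n : 3 ≤ Fintype.card F := by
    obtain ⟨k, hk⟩ := hodd; omega
  have hq3 : (3 : ℝ) ≤ (Fintype.card F : ℝ) := by exact_mod_cast hq3n
  have hQ0 : (0 : ℝ) < (Fintype.card F : ℝ) := by linarith
  set Q : ℝ := (Fintype.card F : ℝ) with hQdef
  set e : ℝ := (E.card : ℝ) with hedef
  have he0 : (0 : ℝ) ≤ e := Nat.cast_nonneg _
  have hcard : (Fintype.card (Fin 4 → F) : ℝ) = Q ^ 4 := by
    rw [Fintype.card_fun, Fintype.card_fin]
    push_cast
    rfl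
  -- surface size facts
  have hSlow := quadSurf_card_low hχ hne2 ha hq3
  have hSpos : (0 : ℝ) < ((quadSurf a).card : ℝ) := by
    nlinarith [pow_pos hQ0 3]
  have hSinv : (((quadSurf a).card : ℝ))⁻¹ ≤ (3 / 2) * (Q ^ 3)⁻¹ := by
    have h1 : (((quadSurf a).card : ℝ))⁻¹ ≤ ((2 / 3) * Q ^ 3)⁻¹ :=
      inv_anti₀ (by positivity) hSlow
    calc (((quadSurf a).card : ℝ))⁻¹ ≤ ((2 / 3) * Q ^ 3)⁻¹ := h1
      _ = (3 / 2) * (Q ^ 3)⁻¹ := by rw [mul_inv]; norm_num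
  have hSinv0 : (0 : ℝ) ≤ (((quadSurf a).card : ℝ))⁻¹ := by positivity
  -- L2 bounds
  have hL2main : ∑ x : Fin 4 → F, Complex.abs (convInd χ a E x) ^ 2
      ≤ (Q ^ 4)⁻¹ * ((9/2) * e * Q + (9/4) * e ^ 2 + (9/4) * e) := by
    rw [convInd_l2_eq hχ a E]
    refine mul_le_mul_of_nonneg_left ?_ (by positivity)
    refine (convInd_l2_sum_le hχ hne2 ha hq3 E).trans ?_
    have hterm1 : ((((quadSurf a).card : ℝ))⁻¹ * Q ^ 2) ^ 2 * (e * (2 * Q ^ 3) + e ^ 2 * Q ^ 2)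
        ≤ ((3/2) * (Q ^ 3)⁻¹ * Q ^ 2) ^ 2 * (e * (2 * Q ^ 3) + e ^ 2 * Q ^ 2) :=
      mul_le_mul_of_nonneg_right
        (pow_le_pow_left₀ (by positivity) (mul_le_mul_of_nonneg_right hSinv (by positivity)) 2)
        (by positivity)
    have hterm2 : ((((quadSurf a).card : ℝ))⁻¹ * Q) ^ 2 * (Q ^ 4 * e)
        ≤ ((3/2) * (Q ^ 3)⁻¹ * Q) ^ 2 * (Q ^ 4 * e) :=
      mul_le_mul_of_nonneg_right
        (pow_le_pow_left₀ (by positivity) (mul_le_mul_of_nonneg_right hSinv (by positivity)) 2)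
        (by positivity)
    have heq1 : ((3/2) * (Q ^ 3)⁻¹ * Q ^ 2) ^ 2 * (e * (2 * Q ^ 3) + e ^ 2 * Q ^ 2)
        = (9/2) * e * Q + (9/4) * e ^ 2 := by
      field_simp
      ring
    have heq2 : ((3/2) * (Q ^ 3)⁻¹ * Q) ^ 2 * (Q ^ 4 * e) = (9/4) * e := by
      field_simp
      ring
    calc _ ≤ ((3/2) * (Q ^ 3)⁻¹ * Q ^ 2) ^ 2 * (e * (2 * Q ^ 3) + e ^ 2 * Q ^ 2)
          + ((3/2) * (Q ^ 3)⁻¹ * Q) ^ 2 * (Q ^ 4 * e) := add_le_add hterm1 hterm2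
      _ = _ := by rw [heq1, heq2]
  have hL2unif : ∑ x : Fin 4 → F, Complex.abs (convInd χ a E x) ^ 2
      ≤ (Q ^ 4)⁻¹ * ((9/4) * Q ^ 2 * e) := by
    rw [convInd_l2_eq hχ a E]
    refine mul_le_mul_of_nonneg_left ?_ (by positivity)
    refine (convInd_l2_sum_le_unif hχ hne2 ha hq3 E).trans ?_
    have hterm : ((((quadSurf a).card : ℝ))⁻¹ * Q ^ 2) ^ 2 * (Q ^ 4 * e)
        ≤ ((3/2) * (Q ^ 3)⁻¹ * Q ^ 2) ^ 2 * (Q ^ 4 * e) :=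
      mul_le_mul_of_nonneg_right
        (pow_le_pow_left₀ (by positivity) (mul_le_mul_of_nonneg_right hSinv (by positivity)) 2)
        (by positivity)
    have heq : ((3/2) * (Q ^ 3)⁻¹ * Q ^ 2) ^ 2 * (Q ^ 4 * e) = (9/4) * Q ^ 2 * e := by
      field_simp
      ring
    rw [← heq]
    exact hterm
  have hBA : ∀ x : Fin 4 → F, Complex.abs (convInd χ a E x) ≤ 2 * e * (Q ^ 3)⁻¹ :=
    fun x => convInd_abs_le_A hχ hne2 ha hq3 E x
  refine ⟨?_, ?_, ?_⟩
  -- Range 1 : 1 ≤ e ≤ Q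
  · rintro ⟨he1, heQ⟩
    refine Lnorm6_le_of _ (by positivity) ?_
    have hY6 : (4 * Q ^ (-(19:ℝ)/6) * e ^ ((5:ℝ)/6)) ^ (6:ℕ)
        = 4096 * (Q ^ (19:ℕ))⁻¹ * e ^ (5:ℕ) := by
      rw [mul_pow, mul_pow, rpow_six_eq hQ0 (n := 19) (by push_cast; norm_num), rpow_fivesixth_eq he0]
      norm_num
    rw [hY6, hcard]
    have hchain : (Q ^ 4)⁻¹ * ∑ x : Fin 4 → F, Complex.abs (convInd χ a E x) ^ (6:ℕ)
        ≤ (Q ^ 4)⁻¹ * ((2 * e * (Q ^ 3)⁻¹) ^ 4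
            * ((Q ^ 4)⁻¹ * ((9/2) * e * Q + (9/4) * e ^ 2 + (9/4) * e))) := by
      refine mul_le_mul_of_nonneg_left ?_ (by positivity)
      refine (sum_six_le _ (by positivity) hBA).trans ?_
      exact mul_le_mul_of_nonneg_left hL2main (by positivity)
    refine hchain.trans ?_
    have hM : (9/2) * e * Q + (9/4) * e ^ 2 + (9/4) * e ≤ 9 * e * Q := by
      nlinarith [mul_le_mul_of_nonneg_left heQ he0,
        mul_le_mul_of_nonneg_left (show (1:ℝ) ≤ Q by linarith) he0]
    have hstep : (Q ^ 4)⁻¹ * ((2 * e * (Q ^ 3)⁻¹) ^ 4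
          * ((Q ^ 4)⁻¹ * ((9/2) * e * Q + (9/4) * e ^ 2 + (9/4) * e)))
        ≤ (Q ^ 4)⁻¹ * ((2 * e * (Q ^ 3)⁻¹) ^ 4 * ((Q ^ 4)⁻¹ * (9 * e * Q))) := by
      refine mul_le_mul_of_nonneg_left (mul_le_mul_of_nonneg_left
        (mul_le_mul_of_nonneg_left hM (by positivity)) (by positivity)) (by positivity)
    refine hstep.trans ?_
    have heq : (Q ^ 4)⁻¹ * ((2 * e * (Q ^ 3)⁻¹) ^ 4 * ((Q ^ 4)⁻¹ * (9 * e * Q)))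
        = 144 * (e ^ (5:ℕ) * (Q ^ (19:ℕ))⁻¹) := by
      field_simp
      ring
    rw [heq]
    linarith [mul_nonneg (pow_nonneg he0 5) (inv_nonneg.mpr (pow_nonneg hQ0.le 19))]
  -- Range 2 : Q ≤ e ≤ Q^2
  · rintro ⟨hQe, heQ2⟩
    have he1 : (1:ℝ) ≤ e := by linarith
    refine Lnorm6_le_of _ (by positivity) ?_
    have hY6 : (4 * Q ^ (-(10:ℝ)/3) * e) ^ (6:ℕ)
        = 4096 * (Q ^ (20:ℕ))⁻¹ * e ^ (6:ℕ) := by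
      rw [mul_pow, mul_pow, rpow_six_eq hQ0 (n := 20) (by push_cast; norm_num)]
      norm_num
    rw [hY6, hcard]
    have hchain : (Q ^ 4)⁻¹ * ∑ x : Fin 4 → F, Complex.abs (convInd χ a E x) ^ (6:ℕ)
        ≤ (Q ^ 4)⁻¹ * ((2 * e * (Q ^ 3)⁻¹) ^ 4
            * ((Q ^ 4)⁻¹ * ((9/2) * e * Q + (9/4) * e ^ 2 + (9/4) * e))) := by
      refine mul_le_mul_of_nonneg_left ?_ (by positivity)
      refine (sum_six_le _ (by positivity) hBA).trans ?_
      exact mul_le_mul_of_nonneg_left hL2main (by positivity)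
    refine hchain.trans ?_
    have hM : (9/2) * e * Q + (9/4) * e ^ 2 + (9/4) * e ≤ 9 * e ^ 2 := by
      nlinarith [mul_le_mul_of_nonneg_left hQe he0,
        mul_le_mul_of_nonneg_left he1 he0]
    have hstep : (Q ^ 4)⁻¹ * ((2 * e * (Q ^ 3)⁻¹) ^ 4
          * ((Q ^ 4)⁻¹ * ((9/2) * e * Q + (9/4) * e ^ 2 + (9/4) * e)))
        ≤ (Q ^ 4)⁻¹ * ((2 * e * (Q ^ 3)⁻¹) ^ 4 * ((Q ^ 4)⁻¹ * (9 * e ^ 2))) := by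
      refine mul_le_mul_of_nonneg_left (mul_le_mul_of_nonneg_left
        (mul_le_mul_of_nonneg_left hM (by positivity)) (by positivity)) (by positivity)
    refine hstep.trans ?_
    have heq : (Q ^ 4)⁻¹ * ((2 * e * (Q ^ 3)⁻¹) ^ 4 * ((Q ^ 4)⁻¹ * (9 * e ^ 2)))
        = 144 * (e ^ (6:ℕ) * (Q ^ (20:ℕ))⁻¹) := by
      field_simp
      ring
    rw [heq]
    linarith [mul_nonneg (pow_nonneg he0 6) (inv_nonneg.mpr (pow_nonneg hQ0.le 20))]
  -- Range 3 : Q^2 ≤ e ≤ Q^4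
  · rintro ⟨hQ2e, heQ4⟩
    refine Lnorm6_le_of _ (by positivity) ?_
    have hY6 : (4 * Q ^ (-(3:ℝ)) * e ^ ((5:ℝ)/6)) ^ (6:ℕ)
        = 4096 * (Q ^ (18:ℕ))⁻¹ * e ^ (5:ℕ) := by
      rw [mul_pow, mul_pow, rpow_six_eq hQ0 (n := 18) (by push_cast; norm_num), rpow_fivesixth_eq he0]
      norm_num
    rw [hY6, hcard]
    have hchain : (Q ^ 4)⁻¹ * ∑ x : Fin 4 → F, Complex.abs (convInd χ a E x) ^ (6:ℕ)
        ≤ (Q ^ 4)⁻¹ * ((2 * e * (Q ^ 3)⁻¹) ^ 4 * ((Q ^ 4)⁻¹ * ((9/4) * Q ^ 2 * e))) := by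
      refine mul_le_mul_of_nonneg_left ?_ (by positivity)
      refine (sum_six_le _ (by positivity) hBA).trans ?_
      exact mul_le_mul_of_nonneg_left hL2unif (by positivity)
    refine hchain.trans ?_
    have heq : (Q ^ 4)⁻¹ * ((2 * e * (Q ^ 3)⁻¹) ^ 4 * ((Q ^ 4)⁻¹ * ((9/4) * Q ^ 2 * e)))
        = 36 * (e ^ (5:ℕ) * (Q ^ (18:ℕ))⁻¹) := by
      field_simp
      ring
    rw [heq]
    linarith [mul_nonneg (pow_nonneg he0 5) (inv_nonneg.mpr (pow_nonneg hQ0.le 18))]
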